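/- There exists an absolute constant C > 0 such that for every prime power q, every finite set P of points of F_q × F_q, and every finite set L of lines in F_q × F_q, the number of incidences I(P, L) = |{(p, l) ∈ P × L : p ∈ l}| satisfies |I(P, L) − |P||L|/q| ≤ C·√(|P||L|q). -/

import Mathlib

open Finset

private lemma prop_aux {F : Type} [Field F] {a b a' b' : F} (h : (a, b) ≠ (0, 0))
    (h' : (a', b') ≠ (0, 0)) (hd : a * b' = a' * b) :
    ∃ t : F, t ≠ 0 ∧ a = t * a' ∧ b = t * b' := by
  by_cases hb' : b' = 0
  · have ha' : a' ≠ 0 := fun h0 => h' (by simp [hb', h0])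
    have hb : b = 0 := by
      have h1 : a' * b = 0 := by rw [← hd, hb', mul_zero]
      exact (mul_eq_zero.1 h1).resolve_left ha'
    have ha : a ≠ 0 := fun h0 => h (by simp [hb, h0])
    exact ⟨a / a', div_ne_zero ha ha', by field_simp, by simp [hb, hb']⟩
  · have hb : b ≠ 0 := by
      intro h0
      have ha : a ≠ 0 := fun h1 => h (by simp [h0, h1])
      have h1 : a * b' = 0 := by rw [hd, h0, mul_zero]
      exact hb' ((mul_eq_zero.1 h1).resolve_left ha)
    refine ⟨b / b', div_ne_zero hb hb', ?_, by field_simp⟩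
    field_simp
    linear_combination hd

private lemma lines_eq {F : Type} [Field F] {a b c a' b' c' : F}
    (hab : (a, b) ≠ (0, 0)) (hab' : (a', b') ≠ (0, 0)) {x y : F × F} (hxy : x ≠ y)
    (hx : a * x.1 + b * x.2 = c) (hy : a * y.1 + b * y.2 = c)
    (hx' : a' * x.1 + b' * x.2 = c') (hy' : a' * y.1 + b' * y.2 = c') :
    {p : F × F | a * p.1 + b * p.2 = c} = {p : F × F | a' * p.1 + b' * p.2 = c'} := by
  set u := x.1 - y.1 with hu
  set v := x.2 - y.2 with hv
  have e1 : a * u + b * v = 0 := by rw [hu, hv]; linear_combination hx - hy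
  have e2 : a' * u + b' * v = 0 := by rw [hu, hv]; linear_combination hx' - hy'
  have hdet : a * b' = a' * b := by
    by_cases h0 : u = 0
    · have hv0 : v ≠ 0 := by
        intro hv0
        apply hxy
        have h1 : x.1 = y.1 := sub_eq_zero.1 h0
        have h2 : x.2 = y.2 := sub_eq_zero.1 hv0
        exact Prod.ext h1 h2
      have hb : b = 0 := by
        have : b * v = 0 := by linear_combination e1 - u * (0:F) - (by rw [h0] : u = 0) * a
        exact (mul_eq_zero.1 this).resolve_right hv0
      have hb' : b' = 0 := by
        have : b' * v = 0 := by linear_combination e2 - (by rw [h0] : u = (0:F)) * a'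
        exact (mul_eq_zero.1 this).resolve_right hv0
      rw [hb, hb', mul_zero, mul_zero]
    · have h1 : (a * b' - a' * b) * u = 0 := by linear_combination b' * e1 - b * e2
      have h2 := (mul_eq_zero.1 h1).resolve_right h0
      linear_combination h2
  obtain ⟨t, ht0, hta, htb⟩ := prop_aux hab hab' hdet
  have hc : c = t * c' := by linear_combination -hx + t * hx' + x.1 * hta + x.2 * htb
  ext p
  simp only [Set.mem_setOf_eq]
  constructor
  · intro h
    have h2 : t * (a' * p.1 + b' * p.2) = t * c' := by
      linear_combination h - p.1 * hta - p.2 * htb + hc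
    exact mul_left_cancel₀ ht0 h2
  · intro h
    rw [hta, htb, hc]
    linear_combination t * h

private lemma line_card {F : Type} [Field F] [Fintype F] [DecidableEq F] {a b c : F}
    (h : (a, b) ≠ (0, 0)) :
    (Finset.univ.filter (fun x : F × F => a * x.1 + b * x.2 = c)).card = Fintype.card F := by
  by_cases hb : b = 0
  · have ha : a ≠ 0 := fun h0 => h (by simp [hb, h0])
    have himg : Finset.univ.filter (fun x : F × F => a * x.1 + b * x.2 = c)
        = Finset.image (fun t : F => (c * a⁻¹, t)) Finset.univ := by
      ext ⟨x, y⟩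
      simp only [Finset.mem_filter, Finset.mem_univ, true_and, Finset.mem_image, Prod.mk.injEq]
      constructor
      · intro hxy
        refine ⟨y, ?_, rfl⟩
        field_simp
        linear_combination y * hb - hxy
      · rintro ⟨t, h1, rfl⟩
        rw [← h1, hb]
        field_simp
        ring
    rw [himg, Finset.card_image_of_injective _ (fun t₁ t₂ h => by
      simpa using congrArg Prod.snd h), Finset.card_univ]
  · have himg : Finset.univ.filter (fun x : F × F => a * x.1 + b * x.2 = c)
        = Finset.image (fun t : F => (t, (c - a * t) * b⁻¹)) Finset.univ := by
      ext ⟨x, y⟩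
      simp only [Finset.mem_filter, Finset.mem_univ, true_and, Finset.mem_image, Prod.mk.injEq]
      constructor
      · intro hxy
        refine ⟨x, rfl, ?_⟩
        field_simp
        linear_combination -hxy
      · rintro ⟨t, rfl, h2⟩
        rw [← h2]
        field_simp
        ring
    rw [himg, Finset.card_image_of_injective _ (fun t₁ t₂ h => by
      simpa using congrArg Prod.fst h), Finset.card_univ]

/-- There is an absolute constant `C > 0` such that for every finite
field `F_q`, every set `P` of points and every set `L` of lines in `F_q × F_q`, the
number of incidences satisfies `|I(P,L) − |P||L|/q| ≤ C·√(|P||L|q)`. -/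
theorem incidences_points_lines :
    ∃ C : ℝ, 0 < C ∧
      ∀ (F : Type) [Field F] [Fintype F]
        (P : Finset (F × F)) (L : Finset (Set (F × F))),
        (∀ l ∈ L, ∃ a b c : F, (a, b) ≠ (0, 0) ∧
          l = {p : F × F | a * p.1 + b * p.2 = c}) →
        |((@Finset.filter ((F × F) × Set (F × F)) (fun x => x.1 ∈ x.2)
              (Classical.decPred _) (P ×ˢ L)).card : ℝ)
            - (P.card : ℝ) * (L.card : ℝ) / (Fintype.card F : ℝ)|
          ≤ C * Real.sqrt ((P.card : ℝ) * (L.card : ℝ) * (Fintype.card F : ℝ)) := by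
  classical
  refine ⟨1, one_pos, ?_⟩
  intro F _ _ P L hL
  set qn : ℕ := Fintype.card F with hqn
  set q : ℝ := (qn : ℝ) with hq
  have hq0 : (0 : ℝ) < q := by
    rw [hq]; exact_mod_cast Fintype.card_pos
  set n : F × F → ℕ := fun x => (L.filter (fun l => x ∈ l)).card with hn
  set Pc : ℝ := (P.card : ℝ) with hPc
  set Lc : ℝ := (L.card : ℝ) with hLc
  -- incidence count = sum over points of P of n
  have hI : ((P ×ˢ L).filter (fun x : (F × F) × Set (F × F) => x.1 ∈ x.2)).card
      = ∑ p ∈ P, n p := by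
    rw [Finset.card_filter, Finset.sum_product]
    exact Finset.sum_congr rfl fun p _ => (Finset.card_filter _ _).symm
  -- each line has exactly q points
  have hline : ∀ l ∈ L, (Finset.univ.filter (fun x : F × F => x ∈ l)).card = qn := by
    intro l hl
    obtain ⟨a, b, c, hab, rfl⟩ := hL l hl
    rw [hqn]
    convert line_card hab (c := c) using 2
    rfl
  -- two distinct lines meet in at most one point
  have hmeet : ∀ l ∈ L, ∀ l' ∈ L, l ≠ l' →
      (Finset.univ.filter (fun x : F × F => x ∈ l ∧ x ∈ l')).card ≤ 1 := by
    intro l hl l' hl' hne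
    rw [Finset.card_le_one]
    intro x hx y hy
    by_contra hxy
    apply hne
    obtain ⟨a, b, c, hab, rfl⟩ := hL l hl
    obtain ⟨a', b', c', hab', rfl⟩ := hL l' hl'
    simp only [Finset.mem_filter, Set.mem_setOf_eq] at hx hy
    exact lines_eq hab hab' hxy hx.2.1 hy.2.1 hx.2.2 hy.2.2
  -- first moment
  have hsum1 : ∑ x : F × F, n x = L.card * qn := by
    have : ∑ x : F × F, n x = ∑ l ∈ L, (Finset.univ.filter (fun x : F × F => x ∈ l)).card := by
      simp only [hn, Finset.card_filter]
      rw [Finset.sum_comm]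
    rw [this, Finset.sum_congr rfl hline, Finset.sum_const, smul_eq_mul]
  -- second moment
  have hsum2 : ∑ x : F × F, (n x) ^ 2 ≤ L.card * qn + L.card * L.card := by
    have hexp : ∑ x : F × F, (n x) ^ 2
        = ∑ l ∈ L, ∑ l' ∈ L,
            (Finset.univ.filter (fun x : F × F => x ∈ l ∧ x ∈ l')).card := by
      simp only [hn, Finset.card_filter, sq]
      have hpt : ∀ x : F × F, (∑ l ∈ L, if x ∈ l then 1 else 0) *
          (∑ l' ∈ L, if x ∈ l' then 1 else 0)
          = ∑ l ∈ L, ∑ l' ∈ L, (if x ∈ l ∧ x ∈ l' then 1 else 0) := by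
        intro x
        rw [Finset.sum_mul_sum]
        exact Finset.sum_congr rfl fun l _ => Finset.sum_congr rfl fun l' _ => by
          by_cases h1 : x ∈ l <;> by_cases h2 : x ∈ l' <;> simp [h1, h2]
      rw [Finset.sum_congr rfl fun x _ => hpt x, Finset.sum_comm]
      exact Finset.sum_congr rfl fun l _ => Finset.sum_comm
    rw [hexp]
    have hbound : ∀ l ∈ L, ∀ l' ∈ L,
        (Finset.univ.filter (fun x : F × F => x ∈ l ∧ x ∈ l')).card
          ≤ (if l = l' then qn else 0) + 1 := by
      intro l hl l' hl'
      by_cases hll : l = l'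
      · simp only [hll, if_pos rfl]
        calc (Finset.univ.filter (fun x : F × F => x ∈ l' ∧ x ∈ l')).card
            ≤ (Finset.univ.filter (fun x : F × F => x ∈ l')).card :=
              Finset.card_le_card (Finset.filter_subset_filter _ (by intro x hx; exact hx) |>.trans
                (by intro x hx; simp only [Finset.mem_filter] at hx ⊢; exact ⟨hx.1, hx.2.1⟩))
          _ = qn := hline l' hl'
          _ ≤ qn + 1 := Nat.le_succ _
      · simp only [if_neg hll, zero_add]
        exact hmeet l hl l' hl' hll
    calc ∑ l ∈ L, ∑ l' ∈ L, (Finset.univ.filter (fun x : F × F => x ∈ l ∧ x ∈ l')).card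
        ≤ ∑ l ∈ L, ∑ l' ∈ L, ((if l = l' then qn else 0) + 1) :=
          Finset.sum_le_sum fun l hl => Finset.sum_le_sum fun l' hl' => hbound l hl l' hl'
      _ = L.card * qn + L.card * L.card := by
          simp only [Finset.sum_add_distrib, Finset.sum_const, smul_eq_mul, mul_one]
          rw [Finset.sum_congr rfl fun l hl => Finset.sum_ite_eq L l (fun _ => qn)]
          simp only [Finset.sum_ite_mem, Finset.inter_self]
          rw [Finset.sum_const, smul_eq_mul]
  -- variance bound
  set r : ℝ := Lc / q with hr
  have hvar : ∑ x : F × F, ((n x : ℝ) - r) ^ 2 ≤ Lc * q := by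
    have hcard : (Finset.univ : Finset (F × F)).card = qn * qn := by
      rw [Finset.card_univ, Fintype.card_prod]
    have hexp : ∑ x : F × F, ((n x : ℝ) - r) ^ 2
        = (∑ x : F × F, ((n x : ℝ)) ^ 2) - 2 * r * (∑ x : F × F, (n x : ℝ))
          + (qn * qn : ℝ) * r ^ 2 := by
      rw [Finset.sum_congr rfl (fun x _ => by ring :
        ∀ x ∈ (Finset.univ : Finset (F × F)),
          ((n x : ℝ) - r) ^ 2 = (n x : ℝ) ^ 2 - 2 * r * (n x : ℝ) + r ^ 2)]
      rw [Finset.sum_add_distrib, Finset.sum_sub_distrib, ← Finset.mul_sum, Finset.sum_const,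
        hcard, nsmul_eq_mul]
      push_cast
      ring
    have h1 : (∑ x : F × F, (n x : ℝ)) = Lc * q := by
      rw [← Nat.cast_sum, hsum1]; push_cast [hLc, hq]; ring
    have h2 : (∑ x : F × F, ((n x : ℝ)) ^ 2) ≤ Lc * q + Lc * Lc := by
      have := hsum2
      have hcast : ((∑ x : F × F, (n x) ^ 2 : ℕ) : ℝ) ≤ ((L.card * qn + L.card * L.card : ℕ) : ℝ) :=
        Nat.cast_le.2 this
      push_cast at hcast
      convert hcast using 2 <;> push_cast [hLc, hq] <;> ring
    rw [hexp, h1]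
    have hrq : r * q = Lc := by rw [hr]; field_simp
    nlinarith [sq_nonneg r, sq_nonneg (r * q - Lc)]
  -- Cauchy-Schwarz
  have hCS : (∑ p ∈ P, ((n p : ℝ) - r)) ^ 2 ≤ Pc * (Lc * q) := by
    calc (∑ p ∈ P, ((n p : ℝ) - r)) ^ 2
        ≤ P.card * ∑ p ∈ P, ((n p : ℝ) - r) ^ 2 := sq_sum_le_card_mul_sum_sq
      _ = Pc * ∑ p ∈ P, ((n p : ℝ) - r) ^ 2 := by rw [hPc]
      _ ≤ Pc * ∑ x : F × F, ((n x : ℝ) - r) ^ 2 := by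
          refine mul_le_mul_of_nonneg_left ?_ (by rw [hPc]; positivity)
          exact Finset.sum_le_sum_of_subset_of_nonneg (Finset.subset_univ P)
            (fun x _ _ => sq_nonneg _)
      _ ≤ Pc * (Lc * q) := mul_le_mul_of_nonneg_left hvar (by rw [hPc]; positivity)
  -- conclude
  have hdiff : ((((P ×ˢ L).filter (fun x : (F × F) × Set (F × F) => x.1 ∈ x.2)).card : ℝ)
      - Pc * Lc / q) = ∑ p ∈ P, ((n p : ℝ) - r) := by
    rw [hI, Finset.sum_sub_distrib, Finset.sum_const, nsmul_eq_mul]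
    push_cast [hr, hPc]
    ring
  rw [hdiff, one_mul]
  have habs : |∑ p ∈ P, ((n p : ℝ) - r)| = Real.sqrt ((∑ p ∈ P, ((n p : ℝ) - r)) ^ 2) := by
    rw [Real.sqrt_sq_eq_abs]
  rw [habs]
  exact Real.sqrt_le_sqrt (hCS.trans_eq (mul_assoc Pc Lc q).symm)
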